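/- Let n ≥ 3, let 1 ≤ k ≤ n−1, and let i = (i_1,…,i_n) be an admissible sequence with i_n = k in ℤ/nℤ. Then i can be transformed into the canonical admissible sequence i_k := (0, 1, 2, …, k−1, n−1, n−2, …, k+1) by a finite sequence of swaps of two consecutive entries at positions (m, m+1) with 2 ≤ m ≤ n−1, where each swap exchanges entries a, b with a ≠ b+1 and b ≠ a+1 in ℤ/nℤ, and every intermediate sequence is again admissible. -/

import Mathlib

/-- A sequence `(i_1,…,i_n)` of elements of `ZMod n`, encoded as `f : Fin n → ZMod n`
(0-based positions), is *admissible* if it is a permutation of `(0,1,…,n−1)`, its first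
entry is `0`, and every later entry is a neighbor (in the cycle `ZMod n`) of some earlier
entry. -/
def Admissible (n : ℕ) (f : Fin n → ZMod n) : Prop :=
  Function.Bijective f ∧
  (∀ h : 0 < n, f ⟨0, h⟩ = 0) ∧
  ∀ k : Fin n, 1 ≤ k.val → ∃ l : Fin n, l < k ∧ (f k = f l + 1 ∨ f k = f l - 1)

/-- The canonical admissible sequence `i_k = (0, 1, …, k−1, n−1, n−2, …, k)` ending in `k`
(0-based: position `j` holds `j` if `j < k`, and `n−1−(j−k)` otherwise). -/
def canonicalSeq (n k : ℕ) : Fin n → ZMod n :=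
  fun j => if j.val < k then (j.val : ZMod n) else ((n - 1 - (j.val - k) : ℕ) : ZMod n)

/-- One admissible swap: exchange the entries at (1-based) positions `(m, m+1)` with
`2 ≤ m ≤ n−1` (0-based positions `(m, m+1)` with `1 ≤ m ≤ n−2`), provided the two entries
are not neighbors in the cycle `ZMod n`. -/
def SwapStep (n : ℕ) (f g : Fin n → ZMod n) : Prop :=
  ∃ (m : Fin n) (hm : m.val + 1 < n), 1 ≤ m.val ∧ m.val ≤ n - 2 ∧
    f m ≠ f ⟨m.val + 1, hm⟩ + 1 ∧ f ⟨m.val + 1, hm⟩ ≠ f m + 1 ∧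
    g = f ∘ Equiv.swap m ⟨m.val + 1, hm⟩

set_option maxHeartbeats 1000000

namespace Stmt7Aux

variable {n k : ℕ}

def iota (k : ℕ) {n : ℕ} [NeZero n] (x : ZMod n) : ℤ :=
  if x.val ≤ k then (x.val : ℤ) else (x.val : ℤ) - n

lemma iota_cast [NeZero n] (x : ZMod n) : ((iota k x : ℤ) : ZMod n) = x := by
  unfold iota
  split <;> simp [ZMod.natCast_val, ZMod.intCast_cast, ZMod.cast_id]

lemma iota_lb [NeZero n] (hk2 : k ≤ n - 1) (x : ZMod n) : (k : ℤ) + 1 - n ≤ iota k x := by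
  have h := x.val_lt
  have h0 : 1 ≤ n := Nat.one_le_iff_ne_zero.2 (NeZero.ne n)
  unfold iota
  split <;> omega

lemma iota_ub [NeZero n] (hk2 : k ≤ n - 1) (x : ZMod n) : iota k x ≤ k := by
  have h := x.val_lt
  have h0 : 1 ≤ n := Nat.one_le_iff_ne_zero.2 (NeZero.ne n)
  unfold iota
  split <;> omega

lemma iota_inj [NeZero n] {x y : ZMod n} (h : iota k x = iota k y) : x = y := by
  have := iota_cast (k := k) x
  rw [h, iota_cast] at this
  exact this.symm

lemma iota_zero [NeZero n] : iota k (0 : ZMod n) = 0 := by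
  unfold iota; simp

lemma iota_k [NeZero n] (hkn : k < n) : iota k ((k : ℕ) : ZMod n) = k := by
  unfold iota
  rw [ZMod.val_natCast_of_lt hkn]
  simp

lemma neigh [NeZero n] (hk2 : k ≤ n - 1) (x y : ZMod n) :
    x = y + 1 ↔ iota k x = iota k y + 1 ∨ iota k x = iota k y + 1 - n := by
  constructor
  · intro h
    have hc : ((iota k x - (iota k y + 1) : ℤ) : ZMod n) = 0 := by
      push_cast [iota_cast, h]; ring
    rw [ZMod.intCast_zmod_eq_zero_iff_dvd] at hc
    obtain ⟨t, ht⟩ := hc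
    have h1 := iota_lb hk2 (k := k) x
    have h2 := iota_ub hk2 x
    have h3 := iota_lb hk2 (k := k) y
    have h4 := iota_ub hk2 y
    have hn0 : (0:ℤ) < n := by exact_mod_cast Nat.pos_of_ne_zero (NeZero.ne n)
    have ht0 : t = 0 ∨ t = -1 := by
      rcases lt_trichotomy t 0 with h | h | h
      · right
        by_contra hne
        have : t ≤ -2 := by omega
        nlinarith
      · left; exact h
      · exfalso; nlinarith
    rcases ht0 with rfl | rfl
    · left; omega
    · right; omega
  · intro h
    have : x = ((iota k x : ℤ) : ZMod n) := (iota_cast x).symm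
    rw [this]
    rcases h with h | h <;> rw [h] <;> push_cast [iota_cast] <;> simp

/-- Cast a `ℤ`-level successor relation back to `ZMod n`. -/
lemma of_iota_succ [NeZero n] {x y : ZMod n} (h : iota k x = iota k y + 1) :
    x = y + 1 := by
  have : x = ((iota k x : ℤ) : ZMod n) := (iota_cast x).symm
  rw [this, h]; push_cast [iota_cast]; ring

lemma of_iota_pred [NeZero n] {x y : ZMod n} (h : iota k x = iota k y - 1) :
    x = y - 1 := by
  have : x = ((iota k x : ℤ) : ZMod n) := (iota_cast x).symm
  rw [this, h]; push_cast [iota_cast]; ring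

/-- The integer lift of the sequence. -/
def Fz (k : ℕ) {n : ℕ} [NeZero n] (f : Fin n → ZMod n) (j : ℕ) : ℤ :=
  if h : j < n then iota k (f ⟨j, h⟩) else 0

def mu (k : ℕ) {n : ℕ} [NeZero n] (f : Fin n → ZMod n) : ℕ :=
  ∑ j ∈ Finset.Icc 1 (n-2), if 0 < Fz k f j then j else 0

lemma Fz_def [NeZero n] (f : Fin n → ZMod n) {j : ℕ} (h : j < n) :
    Fz k f j = iota k (f ⟨j, h⟩) := dif_pos h

section Main

variable [NeZero n] {f : Fin n → ZMod n}
variable (hn : 3 ≤ n) (hk1 : 1 ≤ k) (hk2 : k ≤ n - 1)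
variable (hf : Admissible n f) (hlast : f ⟨n - 1, Nat.sub_one_lt (by omega)⟩ = (k : ZMod n))

include hn hk1 hk2 hf hlast

lemma Fz_inj : ∀ {i j : ℕ}, i < n → j < n → Fz k f i = Fz k f j → i = j := by
  intro i j hi hj h
  rw [Fz_def f hi, Fz_def f hj] at h
  simpa using congrArg Fin.val (hf.1.injective (iota_inj h))

lemma Fz_zero : Fz k f 0 = 0 := by
  rw [Fz_def f (by omega), hf.2.1 (by omega), iota_zero]

lemma Fz_last : Fz k f (n - 1) = k := by
  rw [Fz_def f (Nat.sub_one_lt (by omega))]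
  rw [hlast]
  exact iota_k (by omega)

lemma Fz_ub : ∀ j, Fz k f j ≤ k := by
  intro j
  unfold Fz
  split
  · exact iota_ub hk2 _
  · positivity

lemma Fz_lb : ∀ j, (k:ℤ) + 1 - n ≤ Fz k f j := by
  intro j
  unfold Fz
  split
  · exact iota_lb hk2 _
  · omega

lemma Fz_ne_k : ∀ j, j ≤ n - 2 → Fz k f j ≠ (k : ℤ) := by
  intro j hj h
  rw [Fz_def f (by omega)] at h
  have hx : f ⟨j, by omega⟩ = ((k:ℕ) : ZMod n) := iota_inj (h.trans (iota_k (by omega)).symm)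
  rw [← hlast] at hx
  have : j = n - 1 := by simpa using congrArg Fin.val (hf.1.injective hx)
  omega

lemma stepZ : ∀ j, 1 ≤ j → j ≤ n - 2 →
    ∃ l, l < j ∧ (Fz k f j = Fz k f l + 1 ∨ Fz k f j = Fz k f l - 1) := by
  intro j hj1 hj2
  obtain ⟨l, hl, hcase⟩ := hf.2.2 ⟨j, by omega⟩ (by simpa using hj1)
  have hlv : l.val < j := hl
  have hlvn : l.val < n := l.isLt
  have hl_eta : f ⟨l.val, hlvn⟩ = f l := by congr 1
  refine ⟨l.val, hlv, ?_⟩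
  rw [Fz_def f (show j < n by omega), Fz_def f hlvn, hl_eta]
  rcases hcase with h | h
  · rcases (neigh hk2 _ _).1 h with h' | h'
    · exact Or.inl h'
    · exfalso
      have h1 := iota_lb hk2 (k := k) (f ⟨j, by omega⟩)
      have h2 := iota_ub hk2 (f l)
      have hfl : iota k (f l) = k := by omega
      have hx : f l = ((k:ℕ) : ZMod n) := iota_inj (hfl.trans (iota_k (by omega)).symm)
      rw [← hlast] at hx
      have : l.val = n - 1 := by simpa using congrArg Fin.val (hf.1.injective hx)
      omega
  · have h' : f l = f ⟨j, by omega⟩ + 1 := by rw [h]; ring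
    rcases (neigh hk2 _ _).1 h' with h'' | h''
    · exact Or.inr (by omega)
    · exfalso
      have h1 := iota_lb hk2 (k := k) (f l)
      have h2 := iota_ub hk2 (f ⟨j, by omega⟩)
      have hfj : iota k (f ⟨j, by omega⟩) = k := by omega
      have := Fz_ne_k hn hk1 hk2 hf hlast j hj2
      rw [Fz_def f (show j < n by omega)] at this
      exact this hfj

lemma Fz_ne_zero : ∀ j, 1 ≤ j → j ≤ n - 2 → Fz k f j ≠ 0 := by
  intro j hj1 hj2 h
  have h0 := Fz_zero hn hk1 hk2 hf hlast
  have := Fz_inj hn hk1 hk2 hf hlast (show j < n by omega) (show 0 < n by omega)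
    (h.trans h0.symm)
  omega

lemma interval : ∀ j, j ≤ n - 2 → ∃ a b : ℕ, a + b = j ∧
    (Finset.range (j+1)).image (Fz k f) = Finset.Icc (-(a:ℤ)) (b:ℤ) := by
  intro j
  induction j with
  | zero =>
    intro _
    refine ⟨0, 0, rfl, ?_⟩
    rw [Finset.range_one, Finset.image_singleton, Fz_zero hn hk1 hk2 hf hlast]
    simp
  | succ j ih =>
    intro hj
    obtain ⟨a, b, hab, himg⟩ := ih (by omega)
    obtain ⟨l, hl, hstep⟩ := stepZ hn hk1 hk2 hf hlast (j+1) (by omega) hj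
    have hlmem : Fz k f l ∈ Finset.Icc (-(a:ℤ)) (b:ℤ) := by
      rw [← himg]; exact Finset.mem_image_of_mem _ (Finset.mem_range.2 (by omega))
    have hnotmem : Fz k f (j+1) ∉ Finset.Icc (-(a:ℤ)) (b:ℤ) := by
      rw [← himg]
      intro hmem
      obtain ⟨i, hi, hie⟩ := Finset.mem_image.1 hmem
      have := Fz_inj hn hk1 hk2 hf hlast
        (show i < n by have := Finset.mem_range.1 hi; omega) (by omega) hie
      have := Finset.mem_range.1 hi
      omega
    rw [Finset.mem_Icc] at hlmem hnotmem
    push_neg at hnotmem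
    have hrange : Finset.range (j+1+1) = insert (j+1) (Finset.range (j+1)) :=
      Finset.range_add_one
    rcases hstep with h | h
    · have hFj : Fz k f (j+1) = (b:ℤ) + 1 := by omega
      refine ⟨a, b+1, by omega, ?_⟩
      rw [hrange, Finset.image_insert, himg, hFj]
      ext x
      simp only [Finset.mem_insert, Finset.mem_Icc]
      push_cast
      omega
    · have hFj : Fz k f (j+1) = -(a:ℤ) - 1 := by omega
      refine ⟨a+1, b, by omega, ?_⟩
      rw [hrange, Finset.image_insert, himg, hFj]
      ext x
      simp only [Finset.mem_insert, Finset.mem_Icc]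
      push_cast
      omega

lemma attain {j : ℕ} {lo hi : ℤ}
    (himg : (Finset.range j).image (Fz k f) = Finset.Icc lo hi)
    {t : ℤ} (ht : lo ≤ t ∧ t ≤ hi) : ∃ l, l < j ∧ Fz k f l = t := by
  have : t ∈ (Finset.range j).image (Fz k f) := by
    rw [himg]; exact Finset.mem_Icc.2 ht
  obtain ⟨l, hl, hle⟩ := Finset.mem_image.1 this
  exact ⟨l, Finset.mem_range.1 hl, hle⟩

lemma interval_top :
    (Finset.range (n-1)).image (Fz k f) =
      Finset.Icc ((k:ℤ)+1-n) ((k:ℤ)-1) := by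
  obtain ⟨a, b, hab, himg⟩ := interval hn hk1 hk2 hf hlast (n-2) le_rfl
  have hr : n - 2 + 1 = n - 1 := by omega
  rw [hr] at himg
  have hbk : (b:ℤ) < k := by
    obtain ⟨l, hl, hle⟩ := attain hn hk1 hk2 hf hlast himg
      (t := (b:ℤ)) ⟨by omega, le_refl _⟩
    have h1 := Fz_ub hn hk1 hk2 hf hlast l
    have h2 := Fz_ne_k hn hk1 hk2 hf hlast l (by omega)
    omega
  have hak : (k:ℤ) + 1 - n ≤ -(a:ℤ) := by
    obtain ⟨l, hl, hle⟩ := attain hn hk1 hk2 hf hlast himg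
      (t := -(a:ℤ)) ⟨le_refl _, by omega⟩
    have h1 := Fz_lb hn hk1 hk2 hf hlast l
    omega
  have hb : (b:ℤ) = (k:ℤ) - 1 := by omega
  have ha : -(a:ℤ) = (k:ℤ) + 1 - n := by omega
  rw [himg, hb, ha]

lemma sign_char {j a b : ℕ} (hj1 : 1 ≤ j) (hj2 : j ≤ n - 2) (hab : a + b = j - 1)
    (himg : (Finset.range j).image (Fz k f) = Finset.Icc (-(a:ℤ)) (b:ℤ)) :
    (0 < Fz k f j → Fz k f j = (b:ℤ) + 1) ∧
    (Fz k f j < 0 → Fz k f j = -(a:ℤ) - 1) := by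
  obtain ⟨l, hl, hstep⟩ := stepZ hn hk1 hk2 hf hlast j hj1 hj2
  have hlmem : Fz k f l ∈ Finset.Icc (-(a:ℤ)) (b:ℤ) := by
    rw [← himg]; exact Finset.mem_image_of_mem _ (Finset.mem_range.2 hl)
  have hnotmem : Fz k f j ∉ Finset.Icc (-(a:ℤ)) (b:ℤ) := by
    rw [← himg]
    intro hmem
    obtain ⟨i, hi, hie⟩ := Finset.mem_image.1 hmem
    have h1 := Finset.mem_range.1 hi
    have := Fz_inj hn hk1 hk2 hf hlast (show i < n by omega) (show j < n by omega) hie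
    omega
  rw [Finset.mem_Icc] at hlmem hnotmem
  push_neg at hnotmem
  constructor <;> intro h <;> omega

lemma swap_main {m : ℕ} (hm1 : 1 ≤ m) (hm3 : m + 3 ≤ n)
    (hneg : Fz k f m < 0) (hpos : 0 < Fz k f (m+1)) :
    ∃ g : Fin n → ZMod n,
      SwapStep n f g ∧ Admissible n g ∧ g ⟨n-1, Nat.sub_one_lt (by omega)⟩ = ((k:ℕ) : ZMod n) ∧
      Fz k g m = Fz k f (m+1) ∧ Fz k g (m+1) = Fz k f m ∧
      ∀ j, j ≠ m → j ≠ m+1 → Fz k g j = Fz k f j := by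
  have hmn : m < n := by omega
  have hmn1 : m + 1 < n := by omega
  set m' : Fin n := ⟨m, hmn⟩ with hm'
  set m'' : Fin n := ⟨m+1, hmn1⟩ with hm''
  set g : Fin n → ZMod n := f ∘ Equiv.swap m' m'' with hg
  have hswap_other : ∀ (j:ℕ) (hj : j < n), j ≠ m → j ≠ m+1 → g ⟨j,hj⟩ = f ⟨j,hj⟩ := by
    intro j hj h1 h2
    show f (Equiv.swap m' m'' ⟨j,hj⟩) = _
    rw [Equiv.swap_apply_of_ne_of_ne (Fin.ne_of_val_ne h1) (Fin.ne_of_val_ne h2)]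
  have hg_m : g m' = f m'' := by
    show f (Equiv.swap m' m'' m') = _
    rw [Equiv.swap_apply_left]
  have hg_m1 : g m'' = f m' := by
    show f (Equiv.swap m' m'' m'') = _
    rw [Equiv.swap_apply_right]
  have hFzg_other : ∀ j, j ≠ m → j ≠ m+1 → Fz k g j = Fz k f j := by
    intro j h1 h2
    by_cases hj : j < n
    · rw [Fz_def g hj, Fz_def f hj, hswap_other j hj h1 h2]
    · unfold Fz; rw [dif_neg hj, dif_neg hj]
  have hFzg_m : Fz k g m = Fz k f (m+1) := by
    rw [Fz_def g hmn, Fz_def f hmn1]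
    exact congrArg _ hg_m
  have hFzg_m1 : Fz k g (m+1) = Fz k f m := by
    rw [Fz_def g hmn1, Fz_def f hmn]
    exact congrArg _ hg_m1
  -- structure of values
  obtain ⟨a0, b0, hab0, himg0⟩ := interval hn hk1 hk2 hf hlast (m-1) (by omega)
  have hr : m - 1 + 1 = m := by omega
  rw [hr] at himg0
  have hab0' : a0 + b0 = m - 1 := hab0
  have hchar_m := sign_char hn hk1 hk2 hf hlast hm1 (by omega) hab0' himg0
  have hFm : Fz k f m = -(a0:ℤ) - 1 := hchar_m.2 hneg
  have himg1 : (Finset.range (m+1)).image (Fz k f) =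
      Finset.Icc (-((a0+1:ℕ)):ℤ) ((b0:ℕ):ℤ) := by
    rw [Finset.range_add_one, Finset.image_insert, himg0, hFm]
    ext x
    simp only [Finset.mem_insert, Finset.mem_Icc]
    push_cast
    omega
  have hchar_m1 := sign_char hn hk1 hk2 hf hlast (j := m+1) (a := a0+1) (b := b0)
    (by omega) (by omega) (by omega) himg1
  have hFm1 : Fz k f (m+1) = (b0:ℤ) + 1 := hchar_m1.1 hpos
  -- swap step conditions
  have hne1 : f m' ≠ f m'' + 1 := by
    intro h
    rcases (neigh hk2 _ _).1 h with h' | h' <;>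
    · rw [← Fz_def f hmn, ← Fz_def f hmn1, hFm, hFm1] at h'
      omega
  have hne2 : f m'' ≠ f m' + 1 := by
    intro h
    rcases (neigh hk2 _ _).1 h with h' | h' <;>
    · rw [← Fz_def f hmn1, ← Fz_def f hmn, hFm, hFm1] at h'
      omega
  -- attained endpoints
  obtain ⟨lb, hlb, hlbe⟩ := attain hn hk1 hk2 hf hlast himg0 (t := (b0:ℤ))
    ⟨by omega, le_refl _⟩
  obtain ⟨la, hla, hlae⟩ := attain hn hk1 hk2 hf hlast himg0 (t := -(a0:ℤ))
    ⟨le_refl _, by omega⟩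
  have hadm : Admissible n g := by
    refine ⟨hf.1.comp (Equiv.swap m' m'').bijective, ?_, ?_⟩
    · intro h0
      rw [hswap_other 0 h0 (by omega) (by omega)]
      exact hf.2.1 h0
    · intro j hj1
      have hlbn : lb < n := by omega
      have hlan : la < n := by omega
      by_cases hjm : j.val = m
      · have hj_eq : j = m' := Fin.ext hjm
        refine ⟨⟨lb, hlbn⟩, ?_, Or.inl ?_⟩
        · show lb < j.val
          omega
        · have h1 : g j = f m'' := by rw [hj_eq]; exact hg_m
          have h2 : g ⟨lb, hlbn⟩ = f ⟨lb, hlbn⟩ :=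
            hswap_other lb hlbn (by omega) (by omega)
          rw [h1, h2]
          apply of_iota_succ (k := k)
          rw [← Fz_def f hmn1, ← Fz_def f hlbn, hFm1, hlbe]
      · by_cases hjm1 : j.val = m+1
        · have hj_eq : j = m'' := Fin.ext hjm1
          refine ⟨⟨la, hlan⟩, ?_, Or.inr ?_⟩
          · show la < j.val
            omega
          · have h1 : g j = f m' := by rw [hj_eq]; exact hg_m1
            have h2 : g ⟨la, hlan⟩ = f ⟨la, hlan⟩ :=
              hswap_other la hlan (by omega) (by omega)
            rw [h1, h2]
            apply of_iota_pred (k := k)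
            rw [← Fz_def f hmn, ← Fz_def f hlan, hFm, hlae]
        · obtain ⟨l, hl, hc⟩ := hf.2.2 j hj1
          have hgj : g j = f j := by
            have : j = ⟨j.val, j.isLt⟩ := by simp
            rw [this]
            exact hswap_other j.val j.isLt hjm hjm1
          have hlj : l.val < j.val := hl
          by_cases hlm : l.val = m
          · have hl_eq : l = m' := Fin.ext hlm
            refine ⟨m'', ?_, ?_⟩
            · show m + 1 < j.val
              omega
            · rw [hgj, hg_m1, ← hl_eq]
              exact hc
          · by_cases hlm1 : l.val = m+1
            · have hl_eq : l = m'' := Fin.ext hlm1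
              refine ⟨m', ?_, ?_⟩
              · show m < j.val
                omega
              · rw [hgj, hg_m, ← hl_eq]
                exact hc
            · refine ⟨l, hl, ?_⟩
              have hgl : g l = f l := by
                have : l = ⟨l.val, l.isLt⟩ := by simp
                rw [this]
                exact hswap_other l.val l.isLt hlm hlm1
              rw [hgj, hgl]
              exact hc
  refine ⟨g, ⟨m', hmn1, by simpa using hm1, by simpa using (by omega : m ≤ n - 2), hne1, hne2, rfl⟩,
    hadm, ?_, hFzg_m, hFzg_m1, hFzg_other⟩
  rw [hswap_other (n-1) (Nat.sub_one_lt (by omega)) (by omega) (by omega)]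
  exact hlast

lemma canon_of_sorted
    (hs : ∀ i j, 1 ≤ i → i < j → j ≤ n - 2 → Fz k f i < 0 → Fz k f j < 0) :
    f = canonicalSeq n k := by
  set G : ℕ → ℤ := fun j => if j < k then (j:ℤ) else (k:ℤ)-1-j with hG
  have key : ∀ j, j ≤ n - 2 → (∀ i, i ≤ j → Fz k f i = G i) ∧
      (Finset.range (j+1)).image (Fz k f) =
        Finset.Icc (min 0 ((k:ℤ)-1-j)) (min (j:ℤ) ((k:ℤ)-1)) := by
    intro j
    induction j using Nat.strong_induction_on with
    | _ j ih =>
      intro hj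
      rcases Nat.eq_zero_or_pos j with rfl | hj1
      · constructor
        · intro i hi
          have : i = 0 := by omega
          subst this
          rw [Fz_zero hn hk1 hk2 hf hlast, hG]
          simp only
          rw [if_pos (by omega)]
          simp
        · rw [Finset.range_one, Finset.image_singleton, Fz_zero hn hk1 hk2 hf hlast]
          ext x
          simp only [Finset.mem_singleton, Finset.mem_Icc]
          push_cast
          omega
      · obtain ⟨hprev, himg⟩ := ih (j-1) (by omega) (by omega)
        set a : ℕ := (j-1) - (min (j-1) (k-1)) with ha
        set b : ℕ := min (j-1) (k-1) with hb
        have hr1 : j - 1 + 1 = j := by omega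
        have himg' : (Finset.range j).image (Fz k f) =
            Finset.Icc (-(a:ℤ)) ((b:ℕ):ℤ) := by
          rw [← hr1, himg]
          have e1 : min 0 ((k:ℤ)-1-(j-1:ℕ)) = -(a:ℤ) := by push_cast; omega
          have e2 : min ((j-1:ℕ):ℤ) ((k:ℤ)-1) = (b:ℤ) := by push_cast; omega
          rw [e1, e2]
        have hab : a + b = j - 1 := by omega
        have hchar := sign_char hn hk1 hk2 hf hlast hj1 hj hab himg'
        by_cases hjk : j < k
        · have hpos : 0 < Fz k f j := by
            rcases lt_trichotomy (Fz k f j) 0 with hneg | h0 | hpos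
            · exfalso
              obtain ⟨l, hl, hle⟩ := attain hn hk1 hk2 hf hlast
                (interval_top hn hk1 hk2 hf hlast) (t := (k:ℤ)-1)
                ⟨by omega, le_refl _⟩
              have hl2 : l ≤ n - 2 := by omega
              have hl1 : 1 ≤ l := by
                rcases Nat.eq_zero_or_pos l with rfl | h
                · rw [Fz_zero hn hk1 hk2 hf hlast] at hle
                  omega
                · exact h
              rcases lt_or_ge l j with h | h
              · have := hprev l (by omega)
                rw [hG] at this
                simp only at this
                rw [if_pos (by omega)] at this
                omega
              · rcases eq_or_lt_of_le h with rfl | h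
                · omega
                · have := hs j l hj1 h hl2 hneg
                  omega
            · exact absurd h0 (Fz_ne_zero hn hk1 hk2 hf hlast j hj1 hj)
            · exact hpos
          have hFj : Fz k f j = (b:ℤ) + 1 := hchar.1 hpos
          have hFj' : Fz k f j = (j:ℤ) := by omega
          constructor
          · intro i hi
            rcases eq_or_lt_of_le hi with rfl | h
            · rw [hFj', hG]
              simp only
              rw [if_pos hjk]
            · exact hprev i (by omega)
          · rw [Finset.range_add_one, Finset.image_insert, himg', hFj']
            ext x
            simp only [Finset.mem_insert, Finset.mem_Icc]
            push_cast
            omega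
        · have hneg : Fz k f j < 0 := by
            rcases lt_trichotomy (Fz k f j) 0 with hneg | h0 | hpos
            · exact hneg
            · exact absurd h0 (Fz_ne_zero hn hk1 hk2 hf hlast j hj1 hj)
            · exfalso
              have hFj : Fz k f j = (b:ℤ) + 1 := hchar.1 hpos
              have : Fz k f j = (k:ℤ) := by omega
              exact Fz_ne_k hn hk1 hk2 hf hlast j hj this
          have hFj : Fz k f j = -(a:ℤ) - 1 := hchar.2 hneg
          have hFj' : Fz k f j = (k:ℤ) - 1 - j := by omega
          constructor
          · intro i hi
            rcases eq_or_lt_of_le hi with rfl | h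
            · rw [hFj', hG]
              simp only
              rw [if_neg hjk]
            · exact hprev i (by omega)
          · rw [Finset.range_add_one, Finset.image_insert, himg', hFj']
            ext x
            simp only [Finset.mem_insert, Finset.mem_Icc]
            push_cast
            omega
  funext x
  have hxval := x.isLt
  have hxeta : x = ⟨x.val, x.isLt⟩ := by simp
  by_cases hx : x.val ≤ n - 2
  · have hFx : Fz k f x.val = G x.val := (key x.val hx).1 x.val le_rfl
    rw [Fz_def f x.isLt] at hFx
    have hfx : f x = ((G x.val : ℤ) : ZMod n) := by
      rw [← hFx]
      rw [hxeta]
      exact (iota_cast _).symm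
    rw [hfx, hG]
    simp only
    unfold canonicalSeq
    by_cases hxk : x.val < k
    · rw [if_pos hxk, if_pos hxk]
      push_cast
      rfl
    · rw [if_neg hxk, if_neg hxk]
      have h1 : ((n - 1 - (x.val - k) : ℕ) : ZMod n) =
          (((n - 1 - (x.val - k) : ℕ) : ℤ) : ZMod n) := by push_cast; rfl
      rw [h1, ZMod.intCast_eq_intCast_iff]
      apply Int.ModEq.symm
      rw [Int.modEq_iff_dvd]
      refine ⟨-1, ?_⟩
      push_cast [Nat.cast_sub (show x.val - k ≤ n - 1 by omega),
        Nat.cast_sub (show k ≤ x.val by omega)]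
      omega
  · have hx1 : x.val = n - 1 := by omega
    have hxe : x = ⟨n-1, Nat.sub_one_lt (by omega)⟩ := Fin.ext hx1
    rw [hxe, hlast]
    unfold canonicalSeq
    rw [if_neg (by simp; omega)]
    congr 1
    simp only
    omega

lemma adj_inv :
    ∀ j i, 1 ≤ i → i < j → j ≤ n - 2 → Fz k f i < 0 → 0 < Fz k f j →
      ∃ m, 1 ≤ m ∧ m + 3 ≤ n ∧ Fz k f m < 0 ∧ 0 < Fz k f (m+1) := by
  intro j
  induction j using Nat.strong_induction_on with
  | _ j ih =>
    intro i hi hij hj hFi hFj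
    rcases lt_trichotomy (Fz k f (j-1)) 0 with h | h | h
    · refine ⟨j-1, by omega, by omega, h, ?_⟩
      rw [show j-1+1 = j by omega]
      exact hFj
    · exact absurd h (Fz_ne_zero hn hk1 hk2 hf hlast (j-1) (by omega) (by omega))
    · have hne : i ≠ j - 1 := by
        intro e
        rw [e] at hFi
        omega
      exact ih (j-1) (by omega) i hi (by omega) (by omega) hFi h

end Main

section Loop

variable {n k : ℕ} [NeZero n]

lemma loop (hn : 3 ≤ n) (hk1 : 1 ≤ k) (hk2 : k ≤ n - 1) :
    ∀ (N : ℕ) (f : Fin n → ZMod n), Admissible n f →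
      f ⟨n-1, Nat.sub_one_lt (by omega)⟩ = ((k:ℕ) : ZMod n) → mu k f ≤ N →
      Relation.ReflTransGen (fun a b => SwapStep n a b ∧ Admissible n b)
        f (canonicalSeq n k) := by
  intro N
  induction N with
  | zero =>
    intro f hf hlast hmu
    have hs : ∀ i j, 1 ≤ i → i < j → j ≤ n - 2 → Fz k f i < 0 → Fz k f j < 0 := by
      intro i j hi hij hj hFi
      rcases lt_trichotomy (Fz k f j) 0 with h | h | h
      · exact h
      · exact absurd h (Fz_ne_zero hn hk1 hk2 hf hlast j (by omega) hj)
      · exfalso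
        have hjm : j ∈ Finset.Icc 1 (n-2) := Finset.mem_Icc.2 ⟨by omega, hj⟩
        have hle := Finset.single_le_sum
          (f := fun j => if 0 < Fz k f j then j else 0)
          (fun i _ => Nat.zero_le _) hjm
        simp only [if_pos h] at hle
        have : mu k f = ∑ j ∈ Finset.Icc 1 (n-2), if 0 < Fz k f j then j else 0 := rfl
        omega
    rw [← canon_of_sorted hn hk1 hk2 hf hlast hs]
  | succ N ihN =>
    intro f hf hlast hmu
    by_cases hinv : ∃ i j, 1 ≤ i ∧ i < j ∧ j ≤ n-2 ∧ Fz k f i < 0 ∧ 0 < Fz k f j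
    · obtain ⟨i, j, hi, hij, hj, hFi, hFj⟩ := hinv
      obtain ⟨m, hm1, hm3, hneg, hpos⟩ :=
        adj_inv hn hk1 hk2 hf hlast j i hi hij hj hFi hFj
      obtain ⟨g, hsw, hadm, hglast, hgm, hgm1, hgo⟩ :=
        swap_main hn hk1 hk2 hf hlast hm1 hm3 hneg hpos
      have hmug : mu k g < mu k f := by
        classical
        have hmem : m ∈ Finset.Icc 1 (n-2) := Finset.mem_Icc.2 ⟨hm1, by omega⟩
        have hmem1 : (m+1) ∈ (Finset.Icc 1 (n-2)).erase m :=
          Finset.mem_erase.2 ⟨by omega, Finset.mem_Icc.2 ⟨by omega, by omega⟩⟩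
        have hsplit : ∀ (h : Fin n → ZMod n),
            mu k h = (if 0 < Fz k h m then m else 0) +
              ((if 0 < Fz k h (m+1) then m+1 else 0) +
               ∑ j ∈ ((Finset.Icc 1 (n-2)).erase m).erase (m+1),
                 (if 0 < Fz k h j then j else 0)) := by
          intro h
          rw [mu, ← Finset.add_sum_erase _ _ hmem, ← Finset.add_sum_erase _ _ hmem1]
        have hrest : ∑ j ∈ ((Finset.Icc 1 (n-2)).erase m).erase (m+1),
              (if 0 < Fz k g j then j else 0) =
            ∑ j ∈ ((Finset.Icc 1 (n-2)).erase m).erase (m+1),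
              (if 0 < Fz k f j then j else 0) := by
          apply Finset.sum_congr rfl
          intro j hjmem
          have h1 := (Finset.mem_erase.1 hjmem).1
          have h2 := (Finset.mem_erase.1 (Finset.mem_erase.1 hjmem).2).1
          rw [hgo j h2 h1]
        have e1 : (if 0 < Fz k f m then m else 0) = 0 := if_neg (by omega)
        have e2 : (if 0 < Fz k f (m+1) then m+1 else 0) = m+1 := if_pos hpos
        have e3 : (if 0 < Fz k g m then m else 0) = m := if_pos (by omega)
        have e4 : (if 0 < Fz k g (m+1) then m+1 else 0) = 0 := if_neg (by omega)
        rw [hsplit f, hsplit g, hrest, e1, e2, e3, e4]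
        omega
      exact Relation.ReflTransGen.head ⟨hsw, hadm⟩ (ihN g hadm hglast (by omega))
    · push_neg at hinv
      have hs : ∀ i j, 1 ≤ i → i < j → j ≤ n - 2 → Fz k f i < 0 → Fz k f j < 0 := by
        intro i j hi hij hj hFi
        rcases lt_trichotomy (Fz k f j) 0 with h | h | h
        · exact h
        · exact absurd h (Fz_ne_zero hn hk1 hk2 hf hlast j (by omega) hj)
        · exact absurd h (by simpa using hinv i j hi hij hj hFi)
      rw [← canon_of_sorted hn hk1 hk2 hf hlast hs]

end Loop

end Stmt7Aux

/-- for `n ≥ 3` and `1 ≤ k ≤ n−1`, every admissible sequence ending in `k`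
can be transformed into the canonical admissible sequence `i_k` by finitely many swaps of
non-neighboring consecutive entries (never touching the first position), all intermediate
sequences being admissible. -/
theorem stmt_7 (n k : ℕ) (hn : 3 ≤ n) (hk1 : 1 ≤ k) (hk2 : k ≤ n - 1)
    (f : Fin n → ZMod n) (hf : Admissible n f)
    (hlast : f ⟨n - 1, by omega⟩ = (k : ZMod n)) :
    Relation.ReflTransGen (fun a b => SwapStep n a b ∧ Admissible n b)
      f (canonicalSeq n k) := by
  haveI : NeZero n := ⟨by omega⟩
  exact Stmt7Aux.loop hn hk1 hk2 (Stmt7Aux.mu k f) f hf hlast le_rfl
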